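/- For the degenerate recurrence f_{k+2} = 2α f_{k+1} - α² f_k, the matrix product F_k = T_k ⋯ T_1 (with T_{j+1} having rows (0,1) and (-α²/([j+2]_q[j+1]_q), 2α/[j+2]_q)) is given explicitly for 0 ≤ k ≤ p-1 by F_k = [[-(k-1)α^k/[k]_q!, kα^{k-1}/[k]_q!], [-kα^{k+1}/[k+1]_q!, (k+1)α^k/[k+1]_q!]]. -/
import Mathlib


open Complex Finset

/-- The `q`-integer `[n]_q = 1 + q + ⋯ + q^(n-1)`. -/
noncomputable def qint (q : ℂ) (n : ℕ) : ℂ := ∑ i ∈ Finset.range n, q ^ i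

/-- The `q`-factorial `[n]_q! = [1]_q [2]_q ⋯ [n]_q`, with `[0]_q! = 1`. -/
noncomputable def qfact (q : ℂ) (n : ℕ) : ℂ := ∏ i ∈ Finset.range n, qint q (i + 1)

/-- Degenerate case `c₁ = -2α`, `c₂ = α²`: with `T_{j+1}` having rows `(0,1)` and
`(-α²/([j+2]_q[j+1]_q), 2α/[j+2]_q)` and `F_k = T_k ⋯ T_1`, one has for `0 ≤ k ≤ p-1`
`F_k = [[-(k-1)α^k/[k]_q!, kα^(k-1)/[k]_q!], [-kα^(k+1)/[k+1]_q!, (k+1)α^k/[k+1]_q!]]`. -/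
theorem transfer_matrix_degenerate (p : ℕ) (hp : 1 ≤ p) (q : ℂ)
    (hq : q = Complex.exp (2 * Real.pi * Complex.I / (p + 1))) (α : ℂ)
    (T : ℕ → Matrix (Fin 2) (Fin 2) ℂ)
    (hT : ∀ j, T (j + 1) =
      Matrix.of ![![0, 1],
        ![-α ^ 2 / (qint q (j + 2) * qint q (j + 1)), 2 * α / qint q (j + 2)]])
    (F : ℕ → Matrix (Fin 2) (Fin 2) ℂ)
    (hF0 : F 0 = 1) (hFs : ∀ k, F (k + 1) = T (k + 1) * F k) :
    ∀ k, k + 1 ≤ p →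
      F k = Matrix.of
        ![![-((k : ℂ) - 1) * α ^ k / qfact q k, (k : ℂ) * α ^ (k - 1) / qfact q k],
          ![-(k : ℂ) * α ^ (k + 1) / qfact q (k + 1), ((k : ℂ) + 1) * α ^ k / qfact q (k + 1)]] := by
  have hp1 : (p + 1 : ℕ) ≠ 0 := by omega
  have hprim : IsPrimitiveRoot q (p + 1) := by
    have := Complex.isPrimitiveRoot_exp (p + 1) hp1
    rw [hq]
    convert this using 3
    push_cast
    ring
  have hqne : q ≠ 1 := hprim.ne_one (by omega)
  have hqint : ∀ n, 1 ≤ n → n ≤ p → qint q n ≠ 0 := by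
    intro n h1 h2
    rw [qint, geom_sum_eq hqne]
    apply div_ne_zero
    · exact sub_ne_zero.mpr (hprim.pow_ne_one_of_pos_of_lt (by omega) (by omega))
    · exact sub_ne_zero.mpr hqne
  have hqfact : ∀ n, n ≤ p → qfact q n ≠ 0 := by
    intro n hn
    rw [qfact]
    apply Finset.prod_ne_zero_iff.mpr
    intro i hi
    simp only [Finset.mem_range] at hi
    exact hqint (i + 1) (by omega) (by omega)
  intro k
  induction k with
  | zero =>
    intro _
    rw [hF0]
    ext i j
    fin_cases i <;> fin_cases j <;>
      norm_num [qfact, qint, Matrix.one_apply, Finset.prod_range_succ]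
  | succ k ih =>
    intro hk
    rw [hFs, hT, ih (by omega)]
    have h1 : qint q (k + 1) ≠ 0 := hqint _ (by omega) (by omega)
    have h2 : qint q (k + 2) ≠ 0 := hqint _ (by omega) (by omega)
    have h3 : qfact q k ≠ 0 := hqfact _ (by omega)
    have h4 : qfact q (k + 1) ≠ 0 := hqfact _ (by omega)
    have hf1 : qfact q (k + 1) = qfact q k * qint q (k + 1) := Finset.prod_range_succ _ _
    have hf2 : qfact q (k + 2) = qfact q (k + 1) * qint q (k + 2) := Finset.prod_range_succ _ _
    ext i j
    fin_cases i <;> fin_cases j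
    · simp [Matrix.mul_apply, Fin.sum_univ_two]
    · simp [Matrix.mul_apply, Fin.sum_univ_two]
    · simp only [Matrix.mul_apply, Fin.sum_univ_two, Matrix.of_apply, Matrix.cons_val',
        Matrix.cons_val_zero, Matrix.cons_val_one, Matrix.head_cons, Matrix.empty_val',
        Matrix.cons_val_fin_one, Matrix.head_fin_const]
      rw [hf2, hf1]
      push_cast
      field_simp
      ring
    · rcases k with _ | m
      · norm_num [qfact, qint, Matrix.mul_apply, Fin.sum_univ_two, Finset.prod_range_succ,
          Finset.sum_range_succ]
      · simp only [Matrix.mul_apply, Fin.sum_univ_two, Matrix.of_apply, Matrix.cons_val',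
          Matrix.cons_val_zero, Matrix.cons_val_one, Matrix.head_cons, Matrix.empty_val',
          Matrix.cons_val_fin_one, Matrix.head_fin_const, Nat.add_sub_cancel]
        rw [hf2, hf1]
        push_cast
        field_simp
        ring
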